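/- Owings' theorem on ranks of joins (first Cantor-Bendixson derivative case): for closed sets P, Q ⊆ 2^ω and points X ∈ P, Y ∈ Q, X ⊕ Y ∈ D(P ⊗ Q) if and only if X ∈ D(P) or Y ∈ D(Q). -/
import Mathlib


open Set Topology Filter

abbrev Cantor : Type := ℕ → Bool

def join (X Y : Cantor) : Cantor := fun n => if n % 2 = 0 then X (n / 2) else Y (n / 2)

def IsolatedIn {α : Type*} [TopologicalSpace α] (x : α) (S : Set α) : Prop :=
  ∃ U : Set α, IsOpen U ∧ U ∩ S = {x}

def cbDeriv {α : Type*} [TopologicalSpace α] (S : Set α) : Set α :=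
  {x ∈ S | x ∈ closure (S \ {x})}

noncomputable def cbIter {X : Type*} [TopologicalSpace X] (P : Set X) (α : Ordinal) : Set X :=
  Ordinal.limitRecOn α P (fun _ S => cbDeriv S) (fun o _ ih => ⋂ β : {β // β < o}, ih β.1 β.2)

/-- The join as a homeomorphism `Cantor × Cantor ≃ₜ Cantor`. -/
def joinHomeo : Cantor × Cantor ≃ₜ Cantor where
  toFun p := join p.1 p.2
  invFun Z := (fun n => Z (2 * n), fun n => Z (2 * n + 1))
  left_inv p := by
    ext n
    · simp only [_root_.join]
      rw [if_pos (by omega), Nat.mul_div_cancel_left n (by norm_num)]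
    · simp only [_root_.join]
      rw [if_neg (by omega)]
      have h : (2 * n + 1) / 2 = n := by omega
      rw [h]
  right_inv Z := by
    funext n
    simp only [_root_.join]
    split
    · congr 1; omega
    · congr 1; omega
  continuous_toFun := by
    apply continuous_pi
    intro n
    simp only [_root_.join]
    split
    · exact (continuous_apply _).comp continuous_fst
    · exact (continuous_apply _).comp continuous_snd
  continuous_invFun := by
    apply Continuous.prodMk <;> exact continuous_pi fun n => (continuous_apply _)

/-- Owings' theorem, first-derivative case: `X ⊕ Y ∈ D(P ⊗ Q)` iff `X ∈ D(P)` or `Y ∈ D(Q)`. -/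
theorem owings_first_derivative (P Q : Set Cantor) (hP : IsClosed P) (hQ : IsClosed Q)
    (X Y : Cantor) (hX : X ∈ P) (hY : Y ∈ Q) :
    join X Y ∈ cbDeriv {Z : Cantor | ∃ X ∈ P, ∃ Y ∈ Q, Z = join X Y} ↔
      X ∈ cbDeriv P ∨ Y ∈ cbDeriv Q := by
  have hS : {Z : Cantor | ∃ X ∈ P, ∃ Y ∈ Q, Z = join X Y} = joinHomeo '' (P ×ˢ Q) := by
    ext Z
    constructor
    · rintro ⟨A, hA, B, hB, rfl⟩
      exact ⟨(A, B), ⟨hA, hB⟩, rfl⟩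
    · rintro ⟨⟨A, B⟩, ⟨hA, hB⟩, rfl⟩
      exact ⟨A, hA, B, hB, rfl⟩
  have hJ : join X Y = joinHomeo (X, Y) := rfl
  have hdiff : joinHomeo '' (P ×ˢ Q) \ {joinHomeo (X, Y)} =
      joinHomeo '' ((P ×ˢ Q) \ {(X, Y)}) := by
    rw [← Set.image_singleton, ← Set.image_diff joinHomeo.injective]
  have hsplit : (P ×ˢ Q) \ {(X, Y)} = (P \ {X}) ×ˢ Q ∪ P ×ˢ (Q \ {Y}) := by
    ext ⟨a, b⟩
    simp only [Set.mem_diff, Set.mem_prod, Set.mem_singleton_iff, Set.mem_union, Prod.ext_iff]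
    tauto
  simp only [cbDeriv, Set.mem_setOf_eq]
  rw [hS, hJ, hdiff, ← joinHomeo.image_closure,
    joinHomeo.injective.mem_set_image, hsplit, closure_union]
  simp only [closure_prod_eq, Set.mem_union, Set.mem_prod]
  constructor
  · rintro ⟨-, h⟩
    rcases h with ⟨h1, -⟩ | ⟨-, h2⟩
    · exact Or.inl ⟨hX, h1⟩
    · exact Or.inr ⟨hY, h2⟩
  · rintro (⟨hX', h1⟩ | ⟨hY', h2⟩)
    · exact ⟨⟨X, hX, Y, hY, rfl⟩, Or.inl ⟨h1, subset_closure hY⟩⟩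
    · exact ⟨⟨X, hX, Y, hY, rfl⟩, Or.inr ⟨subset_closure hX, h2⟩⟩
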